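/- Fix an integer $k \geq 1$. The polynomial $f(x) = \prod_{i=0}^{k}\left(\prod_{j=0}^{k}(x-j)^2 - (x-i)\right) \in \mathbb{Z}[x]$, of degree $2(k+1)^2$, has no repeated complex roots. -/

import Mathlib

open Polynomial

/-- A monic integer polynomial whose derivative reduces to a unit mod 2 is separable over `ℚ`. -/
private lemma sep_aux (g : Polynomial ℤ) (hm : g.Monic)
    (hu : IsUnit ((g.map (Int.castRingHom (ZMod 2))).derivative)) :
    (g.map (Int.castRingHom ℚ)).Separable := by
  rw [separable_def]
  apply isCoprime_of_irreducible_dvd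
  · rintro ⟨h0, -⟩
    exact (hm.map (Int.castRingHom ℚ)).ne_zero h0
  · intro d hdirr hdvd1 hdvd2
    have halg : algebraMap ℤ ℚ = Int.castRingHom ℚ := algebraMap_int_eq ℚ
    obtain ⟨d', hd'⟩ := IsIntegrallyClosed.eq_map_mul_C_of_dvd (K := ℚ) (g := d) hm
      (by rwa [halg])
    have hdne : d ≠ 0 := hdirr.ne_zero
    have hlc : d.leadingCoeff ≠ 0 := leadingCoeff_ne_zero.mpr hdne
    have hmm : (d'.map (algebraMap ℤ ℚ)).Monic := by
      have h1 : (d'.map (algebraMap ℤ ℚ)).leadingCoeff * d.leadingCoeff = d.leadingCoeff := by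
        have := congrArg leadingCoeff hd'
        rwa [leadingCoeff_mul, leadingCoeff_C] at this
      exact mul_right_cancel₀ hlc (h1.trans (one_mul d.leadingCoeff).symm)
    have hinj : Function.Injective (Int.castRingHom ℚ) := Int.cast_injective
    have hdm : d'.Monic := by
      rw [hinj.monic_map_iff]
      rwa [halg] at hmm
    have hdvdQ : d'.map (Int.castRingHom ℚ) ∣ (derivative g).map (Int.castRingHom ℚ) := by
      rw [← derivative_map]
      refine dvd_trans ?_ hdvd2
      rw [← halg]
      exact ⟨C d.leadingCoeff, hd'.symm⟩
    have hdvdZ : d' ∣ derivative g := (map_dvd_map _ hinj hdm).mp hdvdQ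
    have hdvd2' : d'.map (Int.castRingHom (ZMod 2)) ∣ (g.map (Int.castRingHom (ZMod 2))).derivative := by
      rw [derivative_map]
      exact Polynomial.map_dvd _ hdvdZ
    have hunit : IsUnit (d'.map (Int.castRingHom (ZMod 2))) := isUnit_of_dvd_unit hdvd2' hu
    have h0 : (d'.map (Int.castRingHom (ZMod 2))).natDegree = 0 := natDegree_eq_zero_of_isUnit hunit
    rw [hdm.natDegree_map] at h0
    have hdd : d.natDegree = d'.natDegree := by
      have := congrArg natDegree hd'
      rw [natDegree_mul_C hlc] at this
      rw [← this, halg, natDegree_map_eq_of_injective hinj]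
    have := hdirr.natDegree_pos
    omega


open Polynomial in
/-- Fix `k ≥ 1`. The polynomial `f(x) = ∏_{i=0}^{k} (∏_{j=0}^{k} (x-j)² - (x-i)) ∈ ℤ[x]`,
of degree `2(k+1)²`, has no repeated complex roots. -/
theorem statement11 (k : ℕ) (hk : 1 ≤ k) (f : Polynomial ℤ)
    (hf : f = ∏ i ∈ Finset.range (k + 1),
      ((∏ j ∈ Finset.range (k + 1), (X - C (j : ℤ)) ^ 2) - (X - C (i : ℤ)))) :
    f.natDegree = 2 * (k + 1) ^ 2 ∧ Squarefree (f.map (Int.castRingHom ℂ)) := by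
  set Q : Polynomial ℤ := ∏ j ∈ Finset.range (k + 1), (X - C (j : ℤ)) with hQ
  have hQm : Q.Monic := monic_prod_of_monic _ _ fun j _ => monic_X_sub_C _
  have hQdeg : Q.natDegree = k + 1 := by
    rw [hQ, natDegree_prod_of_monic _ _ fun j _ => monic_X_sub_C _,
      Finset.sum_congr rfl fun j _ => natDegree_X_sub_C _]
    simp
  have hf' : f = ∏ i ∈ Finset.range (k + 1), (Q ^ 2 - (X - C (i : ℤ))) := by
    rw [hf]
    exact Finset.prod_congr rfl fun i _ => by rw [Finset.prod_pow]
  have h2m : (Q ^ 2).Monic := hQm.pow 2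
  have hnd2 : (Q ^ 2).natDegree = 2 * (k + 1) := by rw [natDegree_pow, hQdeg]
  have hdeglt : ∀ i : ℕ, (X - C (i : ℤ)).degree < (Q ^ 2).degree := by
    intro i
    rw [degree_X_sub_C, degree_eq_natDegree h2m.ne_zero, hnd2]
    exact_mod_cast (by omega : 1 < 2 * (k + 1))
  have hmon : ∀ i : ℕ, (Q ^ 2 - (X - C (i : ℤ))).Monic := by
    intro i
    have hdeg : (-(X - C (i : ℤ))).degree < (Q ^ 2).degree := by
      rw [degree_neg]; exact hdeglt i
    simpa [sub_eq_add_neg] using h2m.add_of_left hdeg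
  have hgdeg : ∀ i : ℕ, (Q ^ 2 - (X - C (i : ℤ))).natDegree = 2 * (k + 1) := by
    intro i
    rw [natDegree_eq_of_degree_eq (degree_sub_eq_left_of_degree_lt (hdeglt i)), hnd2]
  constructor
  · rw [hf', natDegree_prod_of_monic _ _ fun i _ => hmon i,
      Finset.sum_congr rfl fun i _ => hgdeg i, Finset.sum_const, Finset.card_range]
    ring
  · have hsep : (f.map (Int.castRingHom ℚ)).Separable := by
      rw [hf', Polynomial.map_prod]
      apply separable_prod'
      · intro x hx y hy hxy
        have hne : (x : ℚ) - (y : ℚ) ≠ 0 := sub_ne_zero.mpr (by exact_mod_cast hxy)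
        refine ⟨C ((x : ℚ) - y)⁻¹, -C ((x : ℚ) - y)⁻¹, ?_⟩
        have hdiffZ : (Q ^ 2 - (X - C (x : ℤ))) - (Q ^ 2 - (X - C (y : ℤ)))
            = C ((x : ℤ) - (y : ℤ)) := by rw [C_sub]; ring
        have hdiff : (Q ^ 2 - (X - C (x : ℤ))).map (Int.castRingHom ℚ)
            - (Q ^ 2 - (X - C (y : ℤ))).map (Int.castRingHom ℚ) = C ((x : ℚ) - y) := by
          rw [← Polynomial.map_sub, hdiffZ, map_C]
          simp
        rw [neg_mul, ← sub_eq_add_neg, ← mul_sub, hdiff, ← C_mul, inv_mul_cancel₀ hne, C_1]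
      · intro x hx
        apply sep_aux _ (hmon x)
        have hder : ((Q ^ 2 - (X - C (x : ℤ))).map (Int.castRingHom (ZMod 2))).derivative
            = -1 := by
          rw [derivative_map, derivative_sub, derivative_sq, derivative_sub,
            derivative_X, derivative_C, sub_zero, Polynomial.map_sub,
            Polynomial.map_one, Polynomial.map_mul, Polynomial.map_mul, map_C]
          have h2 : (Int.castRingHom (ZMod 2)) 2 = 0 := by decide
          rw [h2, C_0, zero_mul, zero_mul, zero_sub]
        rw [hder]
        exact isUnit_one.neg
    have hmap : f.map (Int.castRingHom ℂ) = (f.map (Int.castRingHom ℚ)).map (algebraMap ℚ ℂ) := by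
      rw [Polynomial.map_map]
      congr 1
    rw [hmap]
    exact hsep.map.squarefree
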